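/- Let G be a finite group and F a functor from the opposite of the category of compact Hausdorff spaces to sets satisfying cofiltered compact codescent (F maps cofiltered limits of compact Hausdorff spaces to filtered colimits of sets). Then F is homotopy invariant on the interval: the two maps F(i_0), F(i_1) : F([0,1]) → F(pt) induced by the endpoint inclusions i_0, i_1 : pt → [0,1] are equal, and consequently F sends the projection [0,1] → pt to a bijection. -/

import Mathlib

open CategoryTheory CategoryTheory.Limits Opposite

/-- The canonical comparison map `colim_i F(X_i) → F(lim_i X_i)` associated to a cone
over a diagram of compact Hausdorff spaces and a `Set`-valued functor `F`. -/
noncomputable def codescentComparison (F : CompHausᵒᵖ ⥤ Type)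
    {I : Type} [SmallCategory I] (D : I ⥤ CompHaus) (c : Cone D) :
    colimit (D.op ⋙ F) → F.obj (op c.pt) :=
  colimit.desc (D.op ⋙ F)
    { pt := F.obj (op c.pt)
      ι :=
        { app := fun i => F.map (c.π.app i.unop).op
          naturality := by
            intro i j f
            simp only [Functor.comp_map, Functor.op_map, Functor.const_obj_map,
              Category.comp_id]
            rw [← F.map_comp, ← op_comp, c.w f.unop]
            exact (Category.comp_id _).symm } }

/-- `F` satisfies cofiltered compact codescent: it takes cofiltered limits of compact
Hausdorff spaces to filtered colimits. -/
def CofilteredCompactCodescent (F : CompHausᵒᵖ ⥤ Type) : Prop :=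
  ∀ (I : Type) (_ : SmallCategory I) (_ : IsCofiltered I)
    (D : I ⥤ CompHaus) (c : Cone D) (_ : IsLimit c),
    Function.Bijective (codescentComparison F D c)

namespace BredonAux

open Metric

attribute [local instance] CategoryTheory.ConcreteCategory.instFunLike

abbrev J : Type := {ε : ℝ // 0 < ε}

instance : IsDirected J (· ≥ ·) :=
  ⟨fun a b => ⟨⟨min a.1 b.1, lt_min a.2 b.2⟩, min_le_left _ _, min_le_right _ _⟩⟩

instance : Nonempty J := ⟨⟨1, one_pos⟩⟩

def ε₀ : J := ⟨1, one_pos⟩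

variable (X : CompHaus.{0}) (s : unitInterval)

abbrev ivl (ε : J) : Set unitInterval := closedBall s ε.1

instance (ε : J) : CompactSpace (ivl s ε) :=
  isCompact_iff_compactSpace.mp (isClosed_closedBall.isCompact)

lemma ivl_sub {ε ε' : J} (f : ε ⟶ ε') : ivl s ε ⊆ ivl s ε' :=
  closedBall_subset_closedBall (Subtype.coe_le_coe.mpr f.le)

def DOb (ε : J) : CompHaus.{0} := CompHaus.of (↥X × ivl s ε)

def D : J ⥤ CompHaus.{0} where
  obj := DOb X s
  map {ε ε'} f := ConcreteCategory.ofHom ⟨fun p => (p.1, Set.inclusion (ivl_sub s f) p.2),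
    continuous_fst.prodMk ((continuous_inclusion (ivl_sub s f)).comp continuous_snd)⟩
  map_id := fun _ => rfl
  map_comp := fun _ _ => rfl

def cn : Cone (D X s) where
  pt := X
  π := { app := fun ε => ConcreteCategory.ofHom ⟨fun (x : ↥X) => (⟨x, s, mem_closedBall_self ε.2.le⟩ : ↥X × ivl s ε),
           continuous_id.prodMk continuous_const⟩
         naturality := fun _ _ _ => rfl }

/-- view a CompHaus hom as a continuous map -/
abbrev asCM {A B : CompHaus.{0}} (f : A ⟶ B) : C(A, B) := ConcreteCategory.hom f

lemma fst_mono (c : Cone (D X s)) {δ ε : J} (h : δ ≤ ε) (z : c.pt) :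
    (asCM (c.π.app ε) z).1 = (asCM (c.π.app δ) z).1 := by
  rw [← c.w (homOfLE h)]; rfl

lemma snd_mono (c : Cone (D X s)) {δ ε : J} (h : δ ≤ ε) (z : c.pt) :
    ((asCM (c.π.app ε) z).2 : unitInterval) = ((asCM (c.π.app δ) z).2 : unitInterval) := by
  rw [← c.w (homOfLE h)]; rfl

lemma snd_val (c : Cone (D X s)) (ε : J) (z : c.pt) :
    ((asCM (c.π.app ε) z).2 : unitInterval) = s := by
  have key : ∀ δ : J, dist (((asCM (c.π.app ε) z).2 : unitInterval)) s ≤ δ.1 := by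
    intro δ
    have hμε : (⟨min δ.1 ε.1, lt_min δ.2 ε.2⟩ : J) ≤ ε := Subtype.mk_le_mk.mpr (min_le_right _ _)
    rw [snd_mono X s c hμε z]
    exact le_trans ((asCM (c.π.app _) z).2.2) (min_le_left _ _)
  have h0 : dist (((asCM (c.π.app ε) z).2 : unitInterval)) s ≤ 0 := by
    refine le_of_forall_pos_le_add fun δ hδ => ?_
    simpa using key ⟨δ, hδ⟩
  exact dist_le_zero.mp h0

def lim : IsLimit (cn X s) where
  lift c := ConcreteCategory.ofHom ⟨fun z => (asCM (c.π.app ε₀) z).1,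
    continuous_fst.comp (asCM (c.π.app ε₀)).continuous⟩
  fac c ε := by
    refine ConcreteCategory.hom_ext _ _ fun z => ?_
    refine Prod.ext ?_ (Subtype.ext ?_)
    · show (asCM (c.π.app ε₀) z).1 = (asCM (c.π.app ε) z).1
      have h1 : (⟨min ε₀.1 ε.1, lt_min ε₀.2 ε.2⟩ : J) ≤ ε₀ := Subtype.mk_le_mk.mpr (min_le_left _ _)
      have h2 : (⟨min ε₀.1 ε.1, lt_min ε₀.2 ε.2⟩ : J) ≤ ε := Subtype.mk_le_mk.mpr (min_le_right _ _)
      rw [fst_mono X s c h1 z, fst_mono X s c h2 z]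
    · exact (snd_val X s c ε z).symm
  uniq c m hm := by
    refine ConcreteCategory.hom_ext _ _ fun z => ?_
    have h := congrArg (fun (f : c.pt ⟶ DOb X s ε₀) => (asCM f z).1) (hm ε₀)
    exact h

end BredonAux

namespace BredonAux
open Metric
attribute [local instance] CategoryTheory.ConcreteCategory.instFunLike

variable {Y : CompHaus.{0}}

def Kmap (X : CompHaus.{0}) (K : C(↥X × unitInterval, ↥Y)) (s : unitInterval) : X ⟶ Y :=
  ConcreteCategory.ofHom ⟨fun x => K (x, s), K.continuous.comp (continuous_id.prodMk continuous_const)⟩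

def Kres (X : CompHaus.{0}) (s : unitInterval) (K : C(↥X × unitInterval, ↥Y)) (ε : J) :
    DOb X s ε ⟶ Y :=
  ConcreteCategory.ofHom ⟨fun p => K (p.1, p.2.1),
    K.continuous.comp (continuous_fst.prodMk (continuous_subtype_val.comp continuous_snd))⟩

def pr (X : CompHaus.{0}) (s : unitInterval) (ε : J) : DOb X s ε ⟶ X :=
  ConcreteCategory.ofHom ⟨Prod.fst, continuous_fst⟩

lemma local_const (F : CompHausᵒᵖ ⥤ Type) (hF : CofilteredCompactCodescent F)
    (X : CompHaus.{0}) (K : C(↥X × unitInterval, ↥Y)) (ξ : F.obj (op Y)) (s : unitInterval) :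
    ∃ ε : ℝ, 0 < ε ∧ ∀ t : unitInterval, dist t s ≤ ε →
      F.map (Kmap X K t).op ξ = F.map (Kmap X K s).op ξ := by
  have hbij := hF J inferInstance inferInstance (D X s) (cn X s) (lim X s)
  set Fd := (D X s).op ⋙ F with hFd
  set α : Fd.obj (op ε₀) := F.map (Kres X s K ε₀).op ξ with hα
  set β : Fd.obj (op ε₀) := F.map (pr X s ε₀).op (F.map (Kmap X K s).op ξ) with hβ
  have hcα : codescentComparison F (D X s) (cn X s) (colimit.ι Fd (op ε₀) α) =
      F.map (Kmap X K s).op ξ := by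
    have h1 : codescentComparison F (D X s) (cn X s) (colimit.ι Fd (op ε₀) α) =
        F.map ((cn X s).π.app ε₀).op α := by
      change (colimit.ι Fd (op ε₀) ≫ colimit.desc Fd _) α = _
      rw [colimit.ι_desc]
    rw [h1, hα]; erw [← FunctorToTypes.map_comp_apply, ← op_comp]
    rfl
  have hcβ : codescentComparison F (D X s) (cn X s) (colimit.ι Fd (op ε₀) β) =
      F.map (Kmap X K s).op ξ := by
    have h1 : codescentComparison F (D X s) (cn X s) (colimit.ι Fd (op ε₀) β) =
        F.map ((cn X s).π.app ε₀).op β := by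
      change (colimit.ι Fd (op ε₀) ≫ colimit.desc Fd _) β = _
      rw [colimit.ι_desc]
    rw [h1, hβ]; erw [← FunctorToTypes.map_comp_apply (F := F) (pr X s ε₀).op ((cn X s).π.app ε₀).op, ← op_comp]
    have : (cn X s).π.app ε₀ ≫ pr X s ε₀ = 𝟙 X := rfl
    erw [this]
    show F.map (𝟙 (op X)) (F.map (Kmap X K s).op ξ) = _
    rw [FunctorToTypes.map_id_apply]
  have hcol : colimit.ι Fd (op ε₀) α = colimit.ι Fd (op ε₀) β :=
    hbij.injective (hcα.trans hcβ.symm)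
  obtain ⟨k, f₁, f₂, hk⟩ := (Types.FilteredColimit.colimit_eq_iff Fd).mp hcol
  have hf : f₂ = f₁ := Subsingleton.elim _ _
  subst hf
  refine ⟨(unop k).1, (unop k).2, fun t ht => ?_⟩
  have h1 : Fd.map f₂ α = F.map (Kres X s K (unop k)).op ξ := by
    rw [hα]
    show F.map ((D X s).map f₂.unop).op (F.map (Kres X s K ε₀).op ξ) = _
    erw [← FunctorToTypes.map_comp_apply, ← op_comp]
    rfl
  have h2 : Fd.map f₂ β = F.map (pr X s (unop k)).op (F.map (Kmap X K s).op ξ) := by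
    rw [hβ]
    show F.map ((D X s).map f₂.unop).op (F.map (pr X s ε₀).op _) = _
    erw [← FunctorToTypes.map_comp_apply (F := F) (pr X s ε₀).op ((D X s).map f₂.unop).op, ← op_comp]
    rfl
  have hstage : F.map (Kres X s K (unop k)).op ξ =
      F.map (pr X s (unop k)).op (F.map (Kmap X K s).op ξ) := by
    rw [← h1, ← h2, hk]
  -- now use the point t
  have hmem : t ∈ ivl s (unop k) := mem_closedBall.mpr ht
  set jt : X ⟶ DOb X s (unop k) :=
    ConcreteCategory.ofHom ⟨fun (x : ↥X) => (⟨x, t, hmem⟩ : ↥X × ivl s (unop k)),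
      continuous_id.prodMk continuous_const⟩ with hjt
  have e1 : jt ≫ Kres X s K (unop k) = Kmap X K t := rfl
  have e2 : jt ≫ pr X s (unop k) = 𝟙 X := rfl
  calc F.map (Kmap X K t).op ξ
      = F.map jt.op (F.map (Kres X s K (unop k)).op ξ) := by
        rw [← FunctorToTypes.map_comp_apply, ← op_comp, e1]
    _ = F.map jt.op (F.map (pr X s (unop k)).op (F.map (Kmap X K s).op ξ)) := by rw [hstage]
    _ = F.map (Kmap X K s).op ξ := by
        rw [← FunctorToTypes.map_comp_apply, ← op_comp, e2]
        show F.map (𝟙 (op X)) (F.map (Kmap X K s).op ξ) = _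
        rw [FunctorToTypes.map_id_apply]

lemma key (F : CompHausᵒᵖ ⥤ Type) (hF : CofilteredCompactCodescent F)
    (X : CompHaus.{0}) (K : C(↥X × unitInterval, ↥Y)) (ξ : F.obj (op Y)) (s t : unitInterval) :
    F.map (Kmap X K s).op ξ = F.map (Kmap X K t).op ξ := by
  have hlc : IsLocallyConstant (fun u : unitInterval => F.map (Kmap X K u).op ξ) := by
    refine (IsLocallyConstant.iff_exists_open _).mpr fun u => ?_
    obtain ⟨ε, hε, h⟩ := local_const F hF X K ξ u
    exact ⟨ball u ε, isOpen_ball, mem_ball_self hε, fun v hv => h v (mem_ball.mp hv).le⟩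
  exact hlc.apply_eq_of_preconnectedSpace s t

end BredonAux

/-- A `Set`-valued functor on compact Hausdorff spaces satisfying
cofiltered compact codescent is homotopy invariant on the interval: the two maps
`F([0,1]) → F(pt)` induced by the endpoint inclusions coincide, and `F` sends the
projection `[0,1] → pt` to a bijection. -/


theorem bredon_codescent_implies_interval_homotopy_invariance
    (F : CompHausᵒᵖ ⥤ Type) (hF : CofilteredCompactCodescent F) :
    (F.map (Quiver.Hom.op
        (ConcreteCategory.ofHom ⟨fun _ => (0 : unitInterval), continuous_const⟩ :
          CompHaus.of PUnit ⟶ CompHaus.of unitInterval)) =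
      F.map (Quiver.Hom.op
        (ConcreteCategory.ofHom ⟨fun _ => (1 : unitInterval), continuous_const⟩ :
          CompHaus.of PUnit ⟶ CompHaus.of unitInterval))) ∧
    Function.Bijective
      (F.map (Quiver.Hom.op
        (ConcreteCategory.ofHom ⟨fun _ => PUnit.unit, continuous_const⟩ :
          CompHaus.of unitInterval ⟶ CompHaus.of PUnit))) := by
  set I : CompHaus.{0} := CompHaus.of unitInterval
  set P : CompHaus.{0} := CompHaus.of PUnit
  set i₀ : P ⟶ I := ConcreteCategory.ofHom ⟨fun _ => (0 : unitInterval), continuous_const⟩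
  set i₁ : P ⟶ I := ConcreteCategory.ofHom ⟨fun _ => (1 : unitInterval), continuous_const⟩
  set prj : I ⟶ P := ConcreteCategory.ofHom ⟨fun _ => PUnit.unit, continuous_const⟩
  -- the evaluation homotopy on the point
  set Kev : C(↥P × unitInterval, ↥I) := ⟨Prod.snd, continuous_snd⟩ with hKev
  have h01 : F.map i₀.op = F.map i₁.op := by
    refine ConcreteCategory.hom_ext _ _ fun ξ => ?_
    have h := BredonAux.key F hF P Kev ξ 0 1
    have e0 : BredonAux.Kmap P Kev 0 = i₀ := rfl
    have e1 : BredonAux.Kmap P Kev 1 = i₁ := rfl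
    rw [e0, e1] at h
    exact h
  refine ⟨h01, ?_, ?_⟩
  · -- injective
    intro a b hab
    have : F.map i₀.op (F.map prj.op a) = F.map i₀.op (F.map prj.op b) := by rw [hab]
    rw [← FunctorToTypes.map_comp_apply, ← FunctorToTypes.map_comp_apply, ← op_comp] at this
    have e : i₀ ≫ prj = 𝟙 P := rfl
    rw [e] at this
    calc a = F.map (𝟙 (op P)) a := (FunctorToTypes.map_id_apply F a).symm
      _ = F.map (𝟙 (op P)) b := this
      _ = b := FunctorToTypes.map_id_apply F b
  · -- surjective
    intro ξ
    refine ⟨F.map i₀.op ξ, ?_⟩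
    -- multiplication homotopy
    set Kmul : C(↥I × unitInterval, ↥I) :=
      ⟨fun p => ⟨p.1.1 * p.2.1, unitInterval.mul_mem p.1.2 p.2.2⟩,
        ((continuous_subtype_val.comp continuous_fst).mul
          (continuous_subtype_val.comp continuous_snd)).subtype_mk _⟩ with hKmul
    have e0 : prj ≫ i₀ = BredonAux.Kmap I Kmul 0 :=
      ConcreteCategory.hom_ext _ _ fun x => Subtype.ext (mul_zero _).symm
    have e1 : BredonAux.Kmap I Kmul 1 = 𝟙 I :=
      ConcreteCategory.hom_ext _ _ fun x => Subtype.ext (mul_one _)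
    have h := BredonAux.key F hF I Kmul ξ 0 1
    rw [← FunctorToTypes.map_comp_apply, ← op_comp, e0, h, e1]
    show F.map (𝟙 (op I)) ξ = ξ
    rw [FunctorToTypes.map_id_apply]
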